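/- Let r, d ≥ 1 and L ≥ 0. Let π and π̂ be Borel probability measures on ℝ^r with finite first moments, and let ν and ν̂ be Borel probability measures on ℝ^d with finite first moments. Let G be a nonempty set of L-Lipschitz functions from ℝ^r to ℝ^d, and suppose ĝ ∈ G satisfies W₁(ĝ#π̂, ν̂) ≤ W₁(g#π̂, ν̂) for every g ∈ G. Then W₁(ĝ#π, ν) ≤ sup_{g ∈ G} W₁(g#π, g#π̂) + inf_{g ∈ G} [ W₁(g#π, g#π̂) + W₁(g#π, ν) ] + 2 · W₁(ν, ν̂); moreover the supremum is finite (each term is at most L · W₁(π, π̂)). -/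

import Mathlib

open MeasureTheory
open scoped ENNReal NNReal BigOperators

noncomputable section

abbrev Euc (k : ℕ) := EuclideanSpace ℝ (Fin k)

/-- Wasserstein-1 distance in Kantorovich–Rubinstein dual form. -/
noncomputable def W1 {k : ℕ} (μ ν : Measure (Euc k)) : ℝ :=
  sSup {t : ℝ | ∃ f : Euc k → ℝ, LipschitzWith 1 f ∧ t = (∫ x, f x ∂μ) - ∫ x, f x ∂ν}

def S {k : ℕ} (μ ν : Measure (Euc k)) : Set ℝ :=
  {t : ℝ | ∃ f : Euc k → ℝ, LipschitzWith 1 f ∧ t = (∫ x, f x ∂μ) - ∫ x, f x ∂ν}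

lemma zero_mem {k} (μ ν : Measure (Euc k)) : (0:ℝ) ∈ S μ ν :=
  ⟨fun _ => 0, (LipschitzWith.const 0).weaken zero_le_one, by simp⟩

lemma integrable_lip {k} {μ : Measure (Euc k)} [IsProbabilityMeasure μ]
    (hμ : Integrable (fun z : Euc k => ‖z‖) μ) {f : Euc k → ℝ} (hf : LipschitzWith 1 f) :
    Integrable f μ := by
  refine (hμ.add (integrable_const |f 0|)).mono' hf.continuous.aestronglyMeasurable ?_
  filter_upwards with x
  have h := hf.dist_le_mul x 0
  simp only [NNReal.coe_one, one_mul, Real.dist_eq, dist_eq_norm, sub_zero] at h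
  rw [Real.norm_eq_abs] at h ⊢
  calc |f x| = |f x - f 0 + f 0| := by ring_nf
    _ ≤ |f x - f 0| + |f 0| := abs_add_le _ _
    _ ≤ ‖x‖ + |f 0| := by linarith

lemma mem_bound {k} {μ ν : Measure (Euc k)} [IsProbabilityMeasure μ] [IsProbabilityMeasure ν]
    (hμ : Integrable (fun z : Euc k => ‖z‖) μ) (hν : Integrable (fun z : Euc k => ‖z‖) ν)
    {t : ℝ} (ht : t ∈ S μ ν) : t ≤ (∫ x, ‖x‖ ∂μ) + ∫ x, ‖x‖ ∂ν := by
  obtain ⟨f, hf, rfl⟩ := ht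
  have hbd : ∀ x : Euc k, |f x - f 0| ≤ ‖x‖ := by
    intro x
    have h := hf.dist_le_mul x 0
    simpa [Real.dist_eq, dist_eq_norm] using h
  have hμi := integrable_lip hμ hf
  have hνi := integrable_lip hν hf
  have h1 : (∫ x, f x ∂μ) - f 0 ≤ ∫ x, ‖x‖ ∂μ := by
    have : ∫ x, (f x - f 0) ∂μ ≤ ∫ x, ‖x‖ ∂μ :=
      integral_mono (hμi.sub (integrable_const _)) hμ
        (fun x => (abs_le.mp (hbd x)).2)
    rwa [integral_sub hμi (integrable_const _), integral_const, probReal_univ,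
      one_smul] at this
  have h2 : -(∫ x, ‖x‖ ∂ν) ≤ (∫ x, f x ∂ν) - f 0 := by
    have h3 : ∫ x, (-‖x‖) ∂ν ≤ ∫ x, (f x - f 0) ∂ν :=
      integral_mono hν.neg (hνi.sub (integrable_const _))
        (fun x => (abs_le.mp (hbd x)).1)
    rwa [integral_neg, integral_sub hνi (integrable_const _), integral_const, probReal_univ,
      one_smul] at h3
  linarith


lemma S_bdd {k} {μ ν : Measure (Euc k)} [IsProbabilityMeasure μ] [IsProbabilityMeasure ν]
    (hμ : Integrable (fun z : Euc k => ‖z‖) μ) (hν : Integrable (fun z : Euc k => ‖z‖) ν) :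
    BddAbove (S μ ν) :=
  ⟨_, fun _ ht => mem_bound hμ hν ht⟩

lemma W1_nonneg {k} {μ ν : Measure (Euc k)} [IsProbabilityMeasure μ] [IsProbabilityMeasure ν]
    (hμ : Integrable (fun z : Euc k => ‖z‖) μ) (hν : Integrable (fun z : Euc k => ‖z‖) ν) :
    0 ≤ sSup (S μ ν) :=
  le_csSup (S_bdd hμ hν) (zero_mem μ ν)

lemma S_symm {k} (μ ν : Measure (Euc k)) : S μ ν = S ν μ := by
  have key : ∀ (α β : Measure (Euc k)), S α β ⊆ S β α := by
    rintro α β t ⟨f, hf, rfl⟩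
    refine ⟨fun x => -f x, ?_, by rw [integral_neg, integral_neg]; ring⟩
    intro x y
    simpa [edist_comm (f x) (f y)] using hf x y
  exact le_antisymm (key μ ν) (key ν μ)

lemma triangle {k} {μ ν ρ : Measure (Euc k)} (h1 : BddAbove (S μ ν)) (h2 : BddAbove (S ν ρ)) :
    sSup (S μ ρ) ≤ sSup (S μ ν) + sSup (S ν ρ) := by
  refine csSup_le ⟨0, zero_mem μ ρ⟩ ?_
  rintro t ⟨f, hf, rfl⟩
  have hA : (∫ x, f x ∂μ) - ∫ x, f x ∂ν ≤ sSup (S μ ν) := le_csSup h1 ⟨f, hf, rfl⟩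
  have hB : (∫ x, f x ∂ν) - ∫ x, f x ∂ρ ≤ sSup (S ν ρ) := le_csSup h2 ⟨f, hf, rfl⟩
  linarith

lemma map_moment {r d : ℕ} {μ : Measure (Euc r)} [IsProbabilityMeasure μ]
    (hμ : Integrable (fun z : Euc r => ‖z‖) μ) {L : ℝ} (hL : 0 ≤ L) {g : Euc r → Euc d}
    (hg : LipschitzWith (Real.toNNReal L) g) :
    Integrable (fun x : Euc d => ‖x‖) (Measure.map g μ) := by
  rw [integrable_map_measure continuous_norm.aestronglyMeasurable
    hg.continuous.measurable.aemeasurable]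
  have hb : ∀ z : Euc r, ‖‖g z‖‖ ≤ L * ‖z‖ + ‖g 0‖ := by
    intro z
    have h := hg.dist_le_mul z 0
    rw [Real.coe_toNNReal L hL, dist_eq_norm, dist_eq_norm, sub_zero] at h
    have := norm_sub_norm_le (g z) (g 0)
    simp only [norm_norm]
    linarith
  exact ((hμ.const_mul L).add (integrable_const ‖g 0‖)).mono'
    (hg.continuous.norm.aestronglyMeasurable) (Filter.Eventually.of_forall hb)

lemma map_S_bound {r d : ℕ} {μ ν : Measure (Euc r)} [IsProbabilityMeasure μ]
    [IsProbabilityMeasure ν]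
    (hμ : Integrable (fun z : Euc r => ‖z‖) μ) (hν : Integrable (fun z : Euc r => ‖z‖) ν)
    {L : ℝ} (hL : 0 ≤ L) {g : Euc r → Euc d} (hg : LipschitzWith (Real.toNNReal L) g)
    {t : ℝ} (ht : t ∈ S (Measure.map g μ) (Measure.map g ν)) : t ≤ L * sSup (S μ ν) := by
  obtain ⟨f, hf, rfl⟩ := ht
  rw [integral_map hg.continuous.measurable.aemeasurable hf.continuous.aestronglyMeasurable,
    integral_map hg.continuous.measurable.aemeasurable hf.continuous.aestronglyMeasurable]
  rcases eq_or_lt_of_le hL with hL0 | hLpos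
  · have hgc : ∀ z : Euc r, g z = g 0 := by
      intro z
      have h := hg.dist_le_mul z 0
      rw [Real.coe_toNNReal L hL, ← hL0, zero_mul] at h
      exact dist_le_zero.mp h
    have : (fun z : Euc r => f (g z)) = fun _ => f (g 0) := funext fun z => by rw [hgc z]
    rw [this, integral_const, integral_const, probReal_univ, probReal_univ, ← hL0]
    simp
  · set h : Euc r → ℝ := fun z => L⁻¹ * f (g z) with hh
    have hhl : LipschitzWith 1 h := by
      rw [lipschitzWith_iff_dist_le_mul]
      intro x y
      have h1 : dist (f (g x)) (f (g y)) ≤ dist (g x) (g y) := by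
        simpa using hf.dist_le_mul (g x) (g y)
      have h2 : dist (g x) (g y) ≤ L * dist x y := by
        simpa [Real.coe_toNNReal L hL] using hg.dist_le_mul x y
      have : dist (h x) (h y) = L⁻¹ * dist (f (g x)) (f (g y)) := by
        rw [hh, Real.dist_eq, Real.dist_eq, ← mul_sub, abs_mul, abs_of_pos (inv_pos.mpr hLpos)]
      rw [this]
      calc L⁻¹ * dist (f (g x)) (f (g y)) ≤ L⁻¹ * (L * dist x y) := by
            apply mul_le_mul_of_nonneg_left (h1.trans h2) (inv_pos.mpr hLpos).le
        _ = dist x y := by field_simp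
      rw [NNReal.coe_one, one_mul]
    have hmem : (∫ z, h z ∂μ) - ∫ z, h z ∂ν ∈ S μ ν := ⟨h, hhl, rfl⟩
    have hle := le_csSup (S_bdd hμ hν) hmem
    have heq : (∫ z, h z ∂μ) - ∫ z, h z ∂ν
        = L⁻¹ * ((∫ z, f (g z) ∂μ) - ∫ z, f (g z) ∂ν) := by
      rw [hh]; simp only [integral_const_mul]; ring
    rw [heq] at hle
    calc (∫ z, f (g z) ∂μ) - ∫ z, f (g z) ∂ν
        = L * (L⁻¹ * ((∫ z, f (g z) ∂μ) - ∫ z, f (g z) ∂ν)) := by field_simp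
      _ ≤ L * sSup (S μ ν) := mul_le_mul_of_nonneg_left hle hL

lemma W1_eq_sSup {k} (μ ν : Measure (Euc k)) : W1 μ ν = sSup (S μ ν) := rfl

/-- **Pathwise oracle inequality for WGAN with nonparametric discriminators**
(the inequality underlying Theorem 1 of the paper). -/
theorem wgan_oracle_inequality_nonparametric
    (r d : ℕ) (hr : 1 ≤ r) (hd : 1 ≤ d) (L : ℝ) (hL : 0 ≤ L)
    (π πh : Measure (Euc r)) (ν νh : Measure (Euc d))
    [IsProbabilityMeasure π] [IsProbabilityMeasure πh]
    [IsProbabilityMeasure ν] [IsProbabilityMeasure νh]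
    (hπ1 : Integrable (fun z : Euc r => ‖z‖) π)
    (hπh1 : Integrable (fun z : Euc r => ‖z‖) πh)
    (hν1 : Integrable (fun x : Euc d => ‖x‖) ν)
    (hνh1 : Integrable (fun x : Euc d => ‖x‖) νh)
    (G : Set (Euc r → Euc d)) (hGne : G.Nonempty)
    (hGLip : ∀ g ∈ G, ∀ x y : Euc r, ‖g x - g y‖ ≤ L * ‖x - y‖)
    (gh : Euc r → Euc d) (hghG : gh ∈ G)
    (hmin : ∀ g ∈ G, W1 (Measure.map gh πh) νh ≤ W1 (Measure.map g πh) νh) :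
    W1 (Measure.map gh π) ν ≤
        sSup {t : ℝ | ∃ g ∈ G, t = W1 (Measure.map g π) (Measure.map g πh)} +
        sInf {t : ℝ | ∃ g ∈ G,
          t = W1 (Measure.map g π) (Measure.map g πh) + W1 (Measure.map g π) ν} +
        2 * W1 ν νh ∧
      ∀ g ∈ G, W1 (Measure.map g π) (Measure.map g πh) ≤ L * W1 π πh := by
  -- every g in G is Lipschitz
  have hlip : ∀ g ∈ G, LipschitzWith (Real.toNNReal L) g := by
    intro g hg
    rw [lipschitzWith_iff_dist_le_mul]
    intro x y
    rw [Real.coe_toNNReal L hL, dist_eq_norm, dist_eq_norm]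
    exact hGLip g hg x y
  -- instances for mapped measures
  have hpm : ∀ g ∈ G, IsProbabilityMeasure (Measure.map g π) := fun g hg =>
    Measure.isProbabilityMeasure_map (hlip g hg).continuous.measurable.aemeasurable
  have hpmh : ∀ g ∈ G, IsProbabilityMeasure (Measure.map g πh) := fun g hg =>
    Measure.isProbabilityMeasure_map (hlip g hg).continuous.measurable.aemeasurable
  have hmom : ∀ g ∈ G, Integrable (fun x : Euc d => ‖x‖) (Measure.map g π) := fun g hg =>
    map_moment hπ1 hL (hlip g hg)
  have hmomh : ∀ g ∈ G, Integrable (fun x : Euc d => ‖x‖) (Measure.map g πh) := fun g hg =>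
    map_moment hπh1 hL (hlip g hg)
  -- second conjunct
  have hsecond : ∀ g ∈ G, W1 (Measure.map g π) (Measure.map g πh) ≤ L * W1 π πh := by
    intro g hg
    have := hpm g hg; have := hpmh g hg
    rw [W1_eq_sSup, W1_eq_sSup]
    exact csSup_le ⟨0, zero_mem _ _⟩ (fun t ht => map_S_bound hπ1 hπh1 hL (hlip g hg) ht)
  refine ⟨?_, hsecond⟩
  set SupSet := {t : ℝ | ∃ g ∈ G, t = W1 (Measure.map g π) (Measure.map g πh)} with hSup
  set InfSet := {t : ℝ | ∃ g ∈ G,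
      t = W1 (Measure.map g π) (Measure.map g πh) + W1 (Measure.map g π) ν} with hInf
  have hSupBdd : BddAbove SupSet := by
    refine ⟨L * W1 π πh, ?_⟩
    rintro t ⟨g, hg, rfl⟩
    exact hsecond g hg
  have hSupMem : W1 (Measure.map gh π) (Measure.map gh πh) ∈ SupSet := ⟨gh, hghG, rfl⟩
  have hSupLe := le_csSup hSupBdd hSupMem
  -- key estimate for arbitrary g
  have key : ∀ g ∈ G, W1 (Measure.map gh π) ν ≤
      sSup SupSet + (W1 (Measure.map g π) (Measure.map g πh) + W1 (Measure.map g π) ν)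
        + 2 * W1 ν νh := by
    intro g hg
    have i1 := hpm gh hghG; have i2 := hpmh gh hghG
    have i3 := hpm g hg; have i4 := hpmh g hg
    have m1 := hmom gh hghG; have m2 := hmomh gh hghG
    have m3 := hmom g hg; have m4 := hmomh g hg
    -- triangles
    have t1 : sSup (S (Measure.map gh π) ν) ≤
        sSup (S (Measure.map gh π) (Measure.map gh πh)) + sSup (S (Measure.map gh πh) ν) :=
      triangle (S_bdd m1 m2) (S_bdd m2 hν1)
    have t2 : sSup (S (Measure.map gh πh) ν) ≤
        sSup (S (Measure.map gh πh) νh) + sSup (S νh ν) :=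
      triangle (S_bdd m2 hνh1) (S_bdd hνh1 hν1)
    have t3 : sSup (S (Measure.map g πh) νh) ≤
        sSup (S (Measure.map g πh) (Measure.map g π)) + sSup (S (Measure.map g π) νh) :=
      triangle (S_bdd m4 m3) (S_bdd m3 hνh1)
    have t4 : sSup (S (Measure.map g π) νh) ≤
        sSup (S (Measure.map g π) ν) + sSup (S ν νh) :=
      triangle (S_bdd m3 hν1) (S_bdd hν1 hνh1)
    have hm := hmin g hg
    rw [W1_eq_sSup, W1_eq_sSup] at hm
    have s1 : S (Measure.map g πh) (Measure.map g π) = S (Measure.map g π) (Measure.map g πh) :=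
      S_symm _ _
    have s2 : S νh ν = S ν νh := S_symm _ _
    rw [s1] at t3; rw [s2] at t2
    have hW : W1 (Measure.map gh π) ν = sSup (S (Measure.map gh π) ν) := rfl
    rw [hW]
    have hSL : sSup (S (Measure.map gh π) (Measure.map gh πh)) ≤ sSup SupSet := hSupLe
    simp only [W1_eq_sSup] at hSL ⊢
    linarith
  -- take infimum
  have hInfNe : InfSet.Nonempty := by
    obtain ⟨g, hg⟩ := hGne
    exact ⟨_, g, hg, rfl⟩
  have hfin : W1 (Measure.map gh π) ν - sSup SupSet - 2 * W1 ν νh ≤ sInf InfSet := by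
    refine le_csInf hInfNe ?_
    rintro t ⟨g, hg, rfl⟩
    have := key g hg
    linarith
  linarith

end
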